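/- Let (T₁, …, Tₙ), n ≥ 2, be a 𝒰ₙ-twisted isometry on H. Then the operators {I - T_i T_i* : 1 ≤ i ≤ n} form a family of pairwise commuting orthogonal projections, and consequently for any subset Λ ⊆ {1,…,n}, the range of ∏_{i ∈ Λ}(I - T_iT_i*) equals ⋂_{i ∈ Λ} ker(T_i*). -/

import Mathlib

open ContinuousLinearMap

/-- The defect projection `I - T T*` of an isometry `T`. -/
noncomputable def defectProj {H : Type*} [NormedAddCommGroup H] [InnerProductSpace ℂ H]
    [CompleteSpace H] (T : H →L[ℂ] H) : H →L[ℂ] H :=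
  1 - T ∘L adjoint T

section aux

variable {H : Type*} [NormedAddCommGroup H] [InnerProductSpace ℂ H] [CompleteSpace H]

lemma defectProj_idem' (T : H →L[ℂ] H) (hT : adjoint T ∘L T = 1) :
    defectProj T ∘L defectProj T = defectProj T := by
  have ha : (T ∘L adjoint T) * (T ∘L adjoint T) = T ∘L adjoint T := by
    rw [mul_def, comp_assoc, ← comp_assoc (adjoint T), hT, one_def, id_comp]
  show (1 - T ∘L adjoint T) * (1 - T ∘L adjoint T) = 1 - T ∘L adjoint T
  rw [mul_sub, sub_mul, sub_mul, mul_one, one_mul, ha]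
  abel

lemma defectProj_sa (T : H →L[ℂ] H) : IsSelfAdjoint (defectProj T) := by
  unfold defectProj
  rw [IsSelfAdjoint, star_sub, star_one, star_eq_adjoint, adjoint_comp, adjoint_adjoint]

omit [CompleteSpace H] in
lemma mem_range_idem {p : H →L[ℂ] H} (hp : p * p = p) {x : H} :
    x ∈ LinearMap.range (p : H →ₗ[ℂ] H) ↔ p x = x := by
  constructor
  · rintro ⟨y, rfl⟩
    have := congrArg (fun f : H →L[ℂ] H => f y) hp
    simpa [mul_apply] using this
  · intro h
    exact ⟨x, h⟩

omit [CompleteSpace H] in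
lemma range_mul_of_comm {p q : H →L[ℂ] H} (hp : p * p = p) (hq : q * q = q)
    (hpq : p * q = q * p) :
    LinearMap.range ((p * q : H →L[ℂ] H) : H →ₗ[ℂ] H) = LinearMap.range (p : H →ₗ[ℂ] H) ⊓ LinearMap.range (q : H →ₗ[ℂ] H) := by
  have hpq' : (p * q) * (p * q) = p * q := by
    rw [mul_assoc, ← mul_assoc q, ← hpq, mul_assoc, hq, ← mul_assoc, hp]
  ext x
  rw [mem_range_idem hpq', Submodule.mem_inf, mem_range_idem hp, mem_range_idem hq]
  constructor
  · intro h
    have hqp : q ((p * q) x) = (p * q) x := by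
      have h2 : q * (p * q) = p * q := by rw [← mul_assoc, ← hpq, mul_assoc, hq]
      have := congrArg (fun f : H →L[ℂ] H => f x) h2
      simpa [mul_apply] using this
    have hpp : p ((p * q) x) = (p * q) x := by
      have h2 : p * (p * q) = p * q := by rw [← mul_assoc, hp]
      have := congrArg (fun f : H →L[ℂ] H => f x) h2
      simpa [mul_apply] using this
    rw [h] at hqp hpp
    exact ⟨hpp, hqp⟩
  · rintro ⟨h1, h2⟩
    show p (q x) = x
    rw [h2, h1]

lemma range_defectProj (T : H →L[ℂ] H) (hT : adjoint T ∘L T = 1) :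
    LinearMap.range (defectProj T : H →ₗ[ℂ] H) = LinearMap.ker (adjoint T : H →ₗ[ℂ] H) := by
  have hiso : ∀ y, adjoint T (T y) = y := fun y => by
    have := congrArg (fun f : H →L[ℂ] H => f y) hT
    simpa [comp_apply] using this
  ext x
  rw [mem_range_idem (by simpa [← mul_def] using defectProj_idem' T hT), LinearMap.mem_ker]
  constructor
  · intro h
    have hh : x - T (adjoint T x) = x := by
      simpa [defectProj, sub_apply, comp_apply] using h
    have h' : T (adjoint T x) = 0 := sub_eq_self.mp hh
    calc adjoint T x = adjoint T (T (adjoint T x)) := (hiso _).symm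
      _ = 0 := by rw [h']; exact map_zero _
  · intro h
    show (1 - T ∘L adjoint T) x = x
    simp [sub_apply, comp_apply, show adjoint T x = 0 from h]

end aux

set_option maxHeartbeats 1000000 in
theorem stmt18 {H : Type*} [NormedAddCommGroup H] [InnerProductSpace ℂ H] [CompleteSpace H]
    (n : ℕ) (hn : 2 ≤ n) (T : Fin n → (H →L[ℂ] H)) (U : Fin n → Fin n → (H →L[ℂ] H))
    (hUunit : ∀ i j, i ≠ j → adjoint (U i j) ∘L U i j = 1 ∧ U i j ∘L adjoint (U i j) = 1)
    (hUadj : ∀ i j, i ≠ j → U j i = adjoint (U i j))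
    (hUcomm : ∀ i j k l, Commute (U i j) (U k l))
    (hTiso : ∀ i, adjoint (T i) ∘L T i = 1)
    (htw1 : ∀ i j, i ≠ j → T i ∘L T j = U i j ∘L (T j ∘L T i))
    (htw2 : ∀ i j, i ≠ j → adjoint (T i) ∘L T j = adjoint (U i j) ∘L (T j ∘L adjoint (T i)))
    (htw3 : ∀ k i j, i ≠ j → T k ∘L U i j = U i j ∘L T k) :
    (∀ i j, Commute (defectProj (T i)) (defectProj (T j))) ∧
    (∀ i, IsSelfAdjoint (defectProj (T i)) ∧
      defectProj (T i) ∘L defectProj (T i) = defectProj (T i)) ∧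
    ∀ Λ : Finset (Fin n),
      ∀ hc : (Λ : Set (Fin n)).Pairwise fun i j => Commute (defectProj (T i)) (defectProj (T j)),
        LinearMap.range ((Λ.noncommProd (fun i => defectProj (T i)) hc : H →L[ℂ] H) : H →ₗ[ℂ] H)
          = ⨅ i ∈ Λ, LinearMap.ker (adjoint (T i) : H →ₗ[ℂ] H) := by
  have pt : ∀ {f g : H →L[ℂ] H}, f = g → ∀ x, f x = g x := fun h x => by rw [h]
  -- key commutation
  have hcomm : ∀ i j, Commute (defectProj (T i)) (defectProj (T j)) := by
    intro i j
    rcases eq_or_ne i j with rfl | hij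
    · exact Commute.refl _
    have huu' : U i j ∘L adjoint (U i j) = 1 := (hUunit i j hij).2
    have hu'u : adjoint (U i j) ∘L U i j = 1 := (hUunit i j hij).1
    have hu'up : ∀ x, adjoint (U i j) (U i j x) = x := fun x => by
      have := pt hu'u x; simpa [comp_apply] using this
    have huu'p : ∀ x, U i j (adjoint (U i j) x) = x := fun x => by
      have := pt huu' x; simpa [comp_apply] using this
    have hAu : T i ∘L U i j = U i j ∘L T i := htw3 i i j hij
    have hAu' : T i ∘L adjoint (U i j) = adjoint (U i j) ∘L T i := by
      have := htw3 i j i hij.symm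
      rwa [hUadj i j hij] at this
    have hA'u' : adjoint (T i) ∘L adjoint (U i j) = adjoint (U i j) ∘L adjoint (T i) := by
      have h := congrArg adjoint hAu
      simp only [adjoint_comp] at h
      exact h.symm
    have h1 : T i ∘L T j = U i j ∘L (T j ∘L T i) := htw1 i j hij
    have h2 : adjoint (T i) ∘L T j = adjoint (U i j) ∘L (T j ∘L adjoint (T i)) :=
      htw2 i j hij
    have hadj1 : adjoint (T i) ∘L adjoint (T j)
        = (adjoint (T j) ∘L adjoint (T i)) ∘L U i j := by
      have h := congrArg adjoint h1
      simp only [adjoint_comp] at h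
      -- h : adjoint (T j) ∘L adjoint (T i) = (adjoint (T i) ∘L adjoint (T j)) ∘L adjoint (U i j)
      rw [h, comp_assoc, hu'u, one_def, comp_id]
    have hadj2 : T i ∘L adjoint (T j) = (adjoint (T j) ∘L T i) ∘L adjoint (U i j) := by
      have h := congrArg adjoint h2
      simp only [adjoint_comp, adjoint_adjoint] at h
      -- h : adjoint (T j) ∘L T i = (T i ∘L adjoint (T j)) ∘L U i j
      rw [h, comp_assoc, huu', one_def, comp_id]
    -- pointwise versions
    have h1p : ∀ x, T i (T j x) = U i j (T j (T i x)) := fun x => by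
      have := pt h1 x; simpa [comp_apply] using this
    have h2p : ∀ x, adjoint (T i) (T j x) = adjoint (U i j) (T j (adjoint (T i) x)) :=
      fun x => by have := pt h2 x; simpa [comp_apply] using this
    have hAu'p : ∀ x, T i (adjoint (U i j) x) = adjoint (U i j) (T i x) := fun x => by
      have := pt hAu' x; simpa [comp_apply] using this
    have hA'u'p : ∀ x, adjoint (T i) (adjoint (U i j) x)
        = adjoint (U i j) (adjoint (T i) x) := fun x => by
      have := pt hA'u' x; simpa [comp_apply] using this
    have hadj1p : ∀ x, adjoint (T i) (adjoint (T j) x)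
        = adjoint (T j) (adjoint (T i) (U i j x)) := fun x => by
      have := pt hadj1 x; simpa [comp_apply] using this
    have hadj2p : ∀ x, T i (adjoint (T j) x)
        = adjoint (T j) (T i (adjoint (U i j) x)) := fun x => by
      have := pt hadj2 x; simpa [comp_apply] using this
    have hE : (T i ∘L adjoint (T i)) ∘L (T j ∘L adjoint (T j))
        = (T j ∘L adjoint (T j)) ∘L (T i ∘L adjoint (T i)) := by
      ext x
      simp only [comp_apply]
      rw [h2p (adjoint (T j) x), hAu'p, hadj1p x, h1p (adjoint (T j) (adjoint (T i) (U i j x))),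
        hu'up, hadj2p (adjoint (T i) (U i j x)), ← hA'u'p (U i j x), hu'up x]
    have hab : Commute (T i ∘L adjoint (T i)) (T j ∘L adjoint (T j)) := hE
    show (1 - T i ∘L adjoint (T i)) * (1 - T j ∘L adjoint (T j))
        = (1 - T j ∘L adjoint (T j)) * (1 - T i ∘L adjoint (T i))
    exact (Commute.one_left _).sub_left ((Commute.one_right _).sub_right hab)
  have hidem : ∀ i, defectProj (T i) * defectProj (T i) = defectProj (T i) := fun i => by
    simpa [← mul_def] using defectProj_idem' (T i) (hTiso i)
  refine ⟨hcomm, fun i => ⟨defectProj_sa (T i), defectProj_idem' (T i) (hTiso i)⟩, ?_⟩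
  have main : ∀ Λ : Finset (Fin n),
      ∀ hc : (Λ : Set (Fin n)).Pairwise fun i j => Commute (defectProj (T i)) (defectProj (T j)),
      (Λ.noncommProd (fun i => defectProj (T i)) hc) * (Λ.noncommProd (fun i => defectProj (T i)) hc)
          = Λ.noncommProd (fun i => defectProj (T i)) hc ∧
        LinearMap.range ((Λ.noncommProd (fun i => defectProj (T i)) hc : H →L[ℂ] H) : H →ₗ[ℂ] H)
          = ⨅ i ∈ Λ, LinearMap.ker (adjoint (T i) : H →ₗ[ℂ] H) := by
    intro Λ
    induction Λ using Finset.induction_on with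
    | empty =>
        intro hc
        rw [Finset.noncommProd_empty]
        refine ⟨one_mul 1, ?_⟩
        simp only [Finset.notMem_empty, iInf_false, iInf_top]
        apply LinearMap.range_eq_top.mpr
        intro x
        exact ⟨x, rfl⟩
    | insert _ _ ha ih =>
        rename_i a s
        intro hc
        rw [Finset.noncommProd_insert_of_notMem _ _ _ _ ha]
        obtain ⟨hqidem, hqrange⟩ := ih (hc.mono (fun x hx => by simp only [Finset.coe_insert]; exact Set.mem_insert_of_mem _ hx))
        have hcq : Commute (defectProj (T a))
            (s.noncommProd (fun i => defectProj (T i))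
              (hc.mono (fun x hx => by simp only [Finset.coe_insert]; exact Set.mem_insert_of_mem _ hx))) :=
          Finset.noncommProd_commute _ _ _ _ fun x _ => hcomm a x
        constructor
        · rw [mul_assoc, ← mul_assoc _ (defectProj (T a)), ← hcq.eq, mul_assoc, hqidem,
            ← mul_assoc, hidem a]
        · rw [range_mul_of_comm (hidem a) hqidem hcq.eq, range_defectProj (T a) (hTiso a),
            hqrange, Finset.iInf_insert]
  exact fun Λ hc => (main Λ hc).2
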